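/- Every vertex sequence P_σ(x)∘0, obtained from x ∈ D_n by appending 0 and applying the bitflips of σ(x) to the first 2n coordinates, is a path in the middle levels graph G_n: consecutive strings differ in exactly one bit, all strings have weight n or n+1, and all vertices are distinct. -/

import Mathlib

/-- A Dyck word: equally many ones (`true`) and zeros (`false`), and
every prefix has at least as many ones as zeros. -/
def IsDyck (x : List Bool) : Prop :=
  x.count true = x.count false ∧
  ∀ k : ℕ, (x.take k).count false ≤ (x.take k).count true

/-- `DyckN n` is the set of Dyck words of length `2n`. -/
def DyckN (n : ℕ) : Set (List Bool) :=
  {x | x.length = 2 * n ∧ IsDyck x}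

/-- `SigmaA a x' s` holds iff the bitflip sequence `σ_a(x')` of the Dyck word
`x'` starting at position `a` (positions are 1-indexed) equals `s`:
`σ_a(()) = ()`, and for `x' = (1,u',0,v')` with `b = a + |u'| + 1`,
`σ_a(x') = (b, a, σ_{a+1}(u'), a-1, b, σ_{b+1}(v'))`. -/
inductive SigmaA : ℕ → List Bool → List ℕ → Prop
  | nil (a : ℕ) : SigmaA a [] []
  | cons (a : ℕ) (u v : List Bool) (su sv : List ℕ) :
      IsDyck u → IsDyck v → SigmaA (a + 1) u su →
      SigmaA (a + u.length + 2) v sv →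
      SigmaA a (true :: u ++ false :: v)
        ((a + u.length + 1) :: a :: su ++ (a - 1) :: (a + u.length + 1) :: sv)

/-- `SigmaSeq x s` holds iff `σ(x) = s`, where for `x` with canonic decomposition
`x = (1,u,0,v)`, `a = 1`, `b = |u| + 2`, one has `σ(x) = (b, a, σ_{a+1}(u))`. -/
def SigmaSeq (x : List Bool) (s : List ℕ) : Prop :=
  ∃ u v su, IsDyck u ∧ IsDyck v ∧ x = true :: u ++ false :: v ∧
    SigmaA 2 u su ∧ s = (u.length + 2) :: 1 :: su

/-- Flip the bit of `x` at the (1-indexed) position `p`. -/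
def flipAt (x : List Bool) (p : ℕ) : List Bool :=
  x.set (p - 1) (!(x.getD (p - 1) false))

/-- Number of positions where two bitstrings differ. -/
def diffCount (a b : List Bool) : ℕ :=
  (List.zipWith (fun s t => s != t) a b).count true

theorem sp_getD_mid (w1 : List Bool) (b : Bool) (w2 : List Bool) :
    (w1 ++ b :: w2).getD w1.length false = b := by
  rw [List.getD_append_right _ _ _ _ le_rfl]; simp

theorem sp_flipAt_mid (w1 : List Bool) (b : Bool) (w2 : List Bool) :
    flipAt (w1 ++ b :: w2) (w1.length + 1) = w1 ++ (!b) :: w2 := by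
  induction w1 with
  | nil => simp [flipAt]
  | cons c t ih => simpa [flipAt, List.getD_cons_succ] using ih

theorem sp_flipAt_offset (w1 z1 : List Bool) (b : Bool) (z2 w2 : List Bool) {p : ℕ}
    (hp : p = w1.length + z1.length + 1) :
    flipAt (w1 ++ (z1 ++ b :: z2) ++ w2) p = w1 ++ (z1 ++ (!b) :: z2) ++ w2 := by
  have h := sp_flipAt_mid (w1 ++ z1) b (z2 ++ w2)
  have hl : p = (w1 ++ z1).length + 1 := by simp [hp]
  rw [hl]
  calc flipAt (w1 ++ (z1 ++ b :: z2) ++ w2) ((w1 ++ z1).length + 1)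
      = flipAt ((w1 ++ z1) ++ b :: (z2 ++ w2)) ((w1 ++ z1).length + 1) := by
        simp [List.append_assoc]
    _ = (w1 ++ z1) ++ (!b) :: (z2 ++ w2) := h
    _ = w1 ++ (z1 ++ (!b) :: z2) ++ w2 := by simp [List.append_assoc]

theorem sp_diffCount_self (z : List Bool) : diffCount z z = 0 := by
  induction z with
  | nil => rfl
  | cons c t ih => simpa [diffCount, List.count_cons] using ih

theorem sp_diffCount_lift (w1 w2 z z' : List Bool) (h : z.length = z'.length) :
    diffCount (w1 ++ z ++ w2) (w1 ++ z' ++ w2) = diffCount z z' := by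
  unfold diffCount
  rw [List.append_assoc, List.append_assoc, List.zipWith_append rfl,
      List.zipWith_append h]
  have h1 := sp_diffCount_self w1
  have h2 := sp_diffCount_self w2
  unfold diffCount at h1 h2
  simp only [List.count_append]
  simp [List.count_replicate]

theorem sp_diffCount_flip (w1 : List Bool) (b c : Bool) (w2 : List Bool) (h : b ≠ c) :
    diffCount (w1 ++ b :: w2) (w1 ++ c :: w2) = 1 := by
  have h2 : diffCount [b] [c] = 1 := by
    simp [diffCount, List.count_cons, h]
  have h3 := sp_diffCount_lift w1 w2 [b] [c] rfl
  simpa using h3.trans h2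

theorem sp_scanl_head_tail (f : List Bool → ℕ → List Bool) (w : List Bool) (l : List ℕ) :
    List.scanl f w l = w :: (List.scanl f w l).tail := by
  cases l <;> simp [List.scanl_cons]

theorem sp_scanl_append (f : List Bool → ℕ → List Bool) (w : List Bool) (l1 l2 : List ℕ) :
    List.scanl f w (l1 ++ l2) =
      List.scanl f w l1 ++ (List.scanl f (List.foldl f w l1) l2).tail := by
  induction l1 generalizing w with
  | nil => simpa using sp_scanl_head_tail f w l2
  | cons p rest ih => simp [List.scanl_cons, ih]

theorem sp_getLast?_scanl (f : List Bool → ℕ → List Bool) (w : List Bool) (l : List ℕ) :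
    (List.scanl f w l).getLast? = some (List.foldl f w l) := by
  induction l generalizing w with
  | nil => simp
  | cons p rest ih =>
    rw [List.scanl_cons, List.getLast?_cons, ih]
    simp

theorem sp_count_len (x : List Bool) : x.count true + x.count false = x.length := by
  induction x with
  | nil => rfl
  | cons b t ih => cases b <;> simp [List.count_cons] <;> omega

theorem sp_getLast?_cons_of {α : Type*} (a : α) {l : List α} {b : α}
    (h : l.getLast? = some b) : (a :: l).getLast? = some b := by
  rw [show a :: l = [a] ++ l from rfl, List.getLast?_append, h]; rfl

theorem sp_getLast?_append_of {α : Type*} (l1 : List α) {l2 : List α} {b : α}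
    (h : l2.getLast? = some b) : (l1 ++ l2).getLast? = some b := by
  rw [List.getLast?_append, h]; rfl

theorem sp_window {a : ℕ} {x' : List Bool} {s : List ℕ} (h : SigmaA a x' s) :
    2 ≤ a →
    ∃ (T : List (List Bool)) (e : List Bool),
      T ≠ [] ∧
      T.head? = some (false :: x') ∧
      T.getLast? = some e ∧
      e.count true = x'.count true ∧
      e.length = x'.length + 1 ∧
      (∀ z ∈ T, z.length = x'.length + 1) ∧
      (∀ z ∈ T, z.count true = x'.count true ∨ z.count true = x'.count true + 1) ∧
      (∀ z ∈ T, z ≠ true :: x') ∧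
      List.Chain' (fun p q => p.length = q.length ∧ diffCount p q = 1) T ∧
      T.Nodup ∧
      (∀ w1 w2 : List Bool, w1.length = a - 2 →
        List.scanl flipAt (w1 ++ (false :: x') ++ w2) s = T.map (fun z => w1 ++ z ++ w2)) := by
  induction h with
  | nil a =>
    intro _
    exact ⟨[[false]], [false], by simp, by simp, by simp, by simp, by simp,
      by simp, by simp, by simp, List.isChain_singleton _, by simp, fun w1 w2 _ => by simp⟩
  | cons a u v su sv hdu hdv hsu hsv ihu ihv =>
    intro ha
    obtain ⟨Tu, eu, hTuNe, hTuHead, hTuLast, heuWt, heuLen, hTuLen, hTuWt, hTuNe1,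
      hTuChain, hTuNodup, hTuScanl⟩ := ihu (by omega)
    obtain ⟨Tv, ev, hTvNe, hTvHead, hTvLast, hevWt, hevLen, hTvLen, hTvWt, hTvNe1,
      hTvChain, hTvNodup, hTvScanl⟩ := ihv (by omega)
    clear ihu ihv hTuNe hTvNe
    obtain ⟨Tu', rfl⟩ : ∃ Tu', Tu = (false :: u) :: Tu' := by
      cases Tu with
      | nil => exact absurd hTuHead (by simp)
      | cons t ts =>
        have ht : t = false :: u := by simpa using hTuHead
        exact ⟨ts, by rw [ht]⟩
    obtain ⟨Tv', rfl⟩ : ∃ Tv', Tv = (false :: v) :: Tv' := by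
      cases Tv with
      | nil => exact absurd hTvHead (by simp)
      | cons t ts =>
        have ht : t = false :: v := by simpa using hTvHead
        exact ⟨ts, by rw [ht]⟩
    refine ⟨(false :: true :: u ++ false :: v) :: (false :: true :: u ++ true :: v) ::
      (((false :: u) :: Tu').map (fun z => false :: z ++ true :: v) ++
        (true :: eu ++ true :: v) :: ((false :: v) :: Tv').map (fun z => true :: eu ++ z)),
      true :: eu ++ ev, by simp, rfl, ?_, ?_, ?_, ?_, ?_, ?_, ?_, ?_, ?_⟩
    -- getLast?
    · refine sp_getLast?_cons_of _ (sp_getLast?_cons_of _ (sp_getLast?_append_of _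
        (sp_getLast?_cons_of _ ?_)))
      rw [List.getLast?_map, hTvLast]; rfl
    -- e.count
    · simp [List.count_cons, List.count_append, heuWt, hevWt] <;> omega
    -- e.length
    · simp [heuLen, hevLen] <;> omega
    -- lengths
    · intro z hz
      simp only [List.mem_cons, List.mem_append, List.mem_map] at hz
      rcases hz with rfl | rfl | ⟨zu, hzu, rfl⟩ | rfl | ⟨zv, hzv, rfl⟩
      · simp <;> omega
      · simp <;> omega
      · have := hTuLen zu (List.mem_cons.mpr hzu)
        simp [this] <;> omega
      · simp [heuLen] <;> omega
      · have := hTvLen zv (List.mem_cons.mpr hzv)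
        simp [heuLen, this] <;> omega
    -- weights
    · intro z hz
      have hwt : (true :: u ++ false :: v).count true = u.count true + v.count true + 1 := by
        simp [List.count_cons, List.count_append] <;> omega
      simp only [List.mem_cons, List.mem_append, List.mem_map] at hz
      rcases hz with rfl | rfl | ⟨zu, hzu, rfl⟩ | rfl | ⟨zv, hzv, rfl⟩
      · left; simp [List.count_cons, List.count_append] <;> omega
      · right; simp [hwt, List.count_cons, List.count_append] <;> omega
      · rcases hTuWt zu (List.mem_cons.mpr hzu) with h | h
        · left; simp [hwt, List.count_cons, List.count_append, h] <;> omega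
        · right; simp [hwt, List.count_cons, List.count_append, h] <;> omega
      · right; simp [hwt, heuWt, List.count_cons, List.count_append] <;> omega
      · rcases hTvWt zv (List.mem_cons.mpr hzv) with h | h
        · left; simp [hwt, heuWt, List.count_cons, List.count_append, h] <;> omega
        · right; simp [hwt, heuWt, List.count_cons, List.count_append, h] <;> omega
    -- z ≠ true :: x'
    · intro z hz
      simp only [List.mem_cons, List.mem_append, List.mem_map] at hz
      rcases hz with rfl | rfl | ⟨zu, hzu, rfl⟩ | rfl | ⟨zv, hzv, rfl⟩
      · simp
      · simp
      · simp
      · intro heq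
        have heq2 : (true :: eu) ++ (true :: v) = (true :: true :: u) ++ (false :: v) := heq
        obtain ⟨h1, h2⟩ := List.append_inj heq2 (by simp [heuLen])
        simp at h2
      · intro heq
        have heq2 : (true :: eu) ++ zv = (true :: true :: u) ++ (false :: v) := heq
        obtain ⟨h1, h2⟩ := List.append_inj' heq2 (by simp [hTvLen zv (List.mem_cons.mpr hzv)])
        injection h1 with _ h1'
        have h2c : List.count true eu = List.count true u + 1 := by rw [h1']; simp
        omega
    -- chain'
    · refine List.isChain_cons.mpr ⟨?_, List.isChain_cons.mpr ⟨?_, ?_⟩⟩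
      · intro y hy
        simp only [List.head?_cons, Option.mem_def, Option.some.injEq] at hy
        subst hy
        refine ⟨by simp, ?_⟩
        have := sp_diffCount_flip (false :: true :: u) false true v (by simp)
        simpa using this
      · intro y hy
        simp only [List.map_cons, List.cons_append, List.head?_cons, Option.mem_def,
          Option.some.injEq] at hy
        subst hy
        refine ⟨by simp, ?_⟩
        have := sp_diffCount_flip [false] true false (u ++ true :: v) (by simp)
        simpa using this
      · refine List.isChain_append.mpr ⟨?_, ?_, ?_⟩
        · refine (List.isChain_map _).mpr (hTuChain.imp ?_)
          rintro p q ⟨hl, hd⟩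
          refine ⟨by simp [hl], ?_⟩
          have := sp_diffCount_lift [false] (true :: v) p q hl
          simpa [hd] using this
        · refine List.isChain_cons.mpr ⟨?_, ?_⟩
          · intro y hy
            simp only [List.map_cons, List.head?_cons, Option.mem_def, Option.some.injEq] at hy
            subst hy
            refine ⟨by simp, ?_⟩
            have := sp_diffCount_flip (true :: eu) true false v (by simp)
            simpa using this
          · refine (List.isChain_map _).mpr (hTvChain.imp ?_)
            rintro p q ⟨hl, hd⟩
            refine ⟨by simp [hl], ?_⟩
            have := sp_diffCount_lift (true :: eu) [] p q hl
            simpa [hd] using this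
        · intro p hp q hq
          rw [List.getLast?_map, hTuLast] at hp
          simp only [Option.mem_def, Option.map_some, Option.some.injEq] at hp
          simp only [List.map_cons, List.head?_cons, Option.mem_def, Option.some.injEq] at hq
          subst hp
          subst hq
          refine ⟨by simp [heuLen], ?_⟩
          have := sp_diffCount_flip [] false true (eu ++ true :: v) (by simp)
          simpa using this
    -- nodup
    · rw [List.nodup_cons, List.nodup_cons]
      refine ⟨?_, ?_, ?_⟩
      · intro hmem
        simp only [List.mem_cons, List.mem_append, List.mem_map] at hmem
        rcases hmem with h | ⟨zu, hzu, h⟩ | h | ⟨zv, hzv, h⟩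
        · have h0 : (false :: true :: u) ++ (false :: v) = (false :: true :: u) ++ (true :: v) := h
          have h2 := List.append_cancel_left h0
          simp at h2
        · have h2 : zu ++ (true :: v) = (true :: u) ++ (false :: v) := by
            injection h with h2
          obtain ⟨h3, h4⟩ := List.append_inj h2 (by simp [hTuLen zu (List.mem_cons.mpr hzu)])
          simp at h4
        · simp at h
        · simp at h
      · intro hmem
        simp only [List.mem_cons, List.mem_append, List.mem_map] at hmem
        rcases hmem with ⟨zu, hzu, h⟩ | h | ⟨zv, hzv, h⟩
        · have h2 : zu ++ (true :: v) = (true :: u) ++ (true :: v) := by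
            injection h with h2
          have h3 := List.append_cancel_right h2
          exact hTuNe1 zu (List.mem_cons.mpr hzu) h3
        · simp at h
        · simp at h
      · refine List.nodup_append.mpr ⟨?_, ?_, ?_⟩
        · refine hTuNodup.map ?_
          intro p q h
          injection h with _ h2
          exact List.append_cancel_right h2
        · rw [List.nodup_cons]
          refine ⟨?_, ?_⟩
          · intro hmem
            simp only [List.mem_cons, List.mem_map] at hmem
            obtain ⟨zv, hzv, h⟩ := hmem
            injection h with _ h2
            have h3 := List.append_cancel_left h2
            exact hTvNe1 zv (List.mem_cons.mpr hzv) h3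
          · refine hTvNodup.map ?_
            intro p q h
            injection h with _ h2
            exact List.append_cancel_left h2
        · intro z hz1 z2 hz2 hzz
          subst hzz
          simp only [List.mem_cons, List.mem_map] at hz1
          obtain ⟨zu, hzu, rfl⟩ := hz1
          simp only [List.mem_cons, List.mem_map] at hz2
          rcases hz2 with h | ⟨zv, hzv, h⟩
          · simp at h
          · simp at h
    -- scanl
    · intro w1 w2 hw1
      have hf1 : flipAt (w1 ++ false :: true :: (u ++ false :: (v ++ w2))) (a + u.length + 1)
          = w1 ++ false :: true :: (u ++ true :: (v ++ w2)) := by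
        have := sp_flipAt_offset w1 (false :: true :: u) false v w2
          (p := a + u.length + 1) (by simp [hw1]; omega)
        simpa using this
      have hf2 : flipAt (w1 ++ false :: true :: (u ++ true :: (v ++ w2))) a
          = w1 ++ false :: false :: (u ++ true :: (v ++ w2)) := by
        have := sp_flipAt_offset w1 [false] true (u ++ true :: v) w2 (p := a)
          (by simp [hw1]; omega)
        simpa using this
      have hsu_eq : List.scanl flipAt (w1 ++ false :: false :: (u ++ true :: (v ++ w2))) su
          = ((false :: u) :: Tu').map (fun z => w1 ++ false :: (z ++ true :: (v ++ w2))) := by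
        have h := hTuScanl (w1 ++ [false]) (true :: (v ++ w2)) (by simp [hw1]; omega)
        have h2 : (w1 ++ [false]) ++ false :: u ++ (true :: (v ++ w2))
            = w1 ++ false :: false :: (u ++ true :: (v ++ w2)) := by simp
        rw [h2] at h
        rw [h]
        apply List.map_congr_left
        intro z _
        simp
      have hfold : List.foldl flipAt (w1 ++ false :: false :: (u ++ true :: (v ++ w2))) su
          = w1 ++ false :: (eu ++ true :: (v ++ w2)) := by
        have h1 := sp_getLast?_scanl flipAt (w1 ++ false :: false :: (u ++ true :: (v ++ w2))) su
        rw [hsu_eq, List.getLast?_map, hTuLast] at h1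
        simpa using h1.symm
      have hf3 : flipAt (w1 ++ false :: (eu ++ true :: (v ++ w2))) (a - 1)
          = w1 ++ true :: (eu ++ true :: (v ++ w2)) := by
        have := sp_flipAt_offset w1 [] false (eu ++ true :: v) w2 (p := a - 1)
          (by simp [hw1]; omega)
        simpa using this
      have hf4 : flipAt (w1 ++ true :: (eu ++ true :: (v ++ w2))) (a + u.length + 1)
          = w1 ++ true :: (eu ++ false :: (v ++ w2)) := by
        have := sp_flipAt_offset w1 (true :: eu) true v w2 (p := a + u.length + 1)
          (by simp [hw1, heuLen]; omega)
        simpa using this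
      have hsv_eq : List.scanl flipAt (w1 ++ true :: (eu ++ false :: (v ++ w2))) sv
          = ((false :: v) :: Tv').map (fun z => w1 ++ true :: (eu ++ (z ++ w2))) := by
        have h := hTvScanl (w1 ++ true :: eu) w2 (by simp [hw1, heuLen]; omega)
        have h2 : (w1 ++ true :: eu) ++ false :: v ++ w2
            = w1 ++ true :: (eu ++ false :: (v ++ w2)) := by simp
        rw [h2] at h
        rw [h]
        apply List.map_congr_left
        intro z _
        simp
      simp only [List.cons_append, List.append_assoc]
      rw [List.scanl_cons, hf1, List.scanl_cons, hf2, sp_scanl_append, hsu_eq, hfold,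
        List.scanl_cons, hf3, List.scanl_cons, hf4, hsv_eq]
      simp [Function.comp_def]

/-- For `x ∈ D_n`, the vertex sequence `P_σ(x)∘0` — obtained by appending a 0
to `x` and to each string reached from `x` by applying the flips of `σ(x)` one
after the other — is a path in the middle levels graph `G_n`: all its strings
have length `2n+1` and weight `n` or `n+1`, consecutive strings differ in
exactly one bit, and all strings are distinct. -/
theorem sigma_path (n : ℕ) (x : List Bool) (s : List ℕ)
    (hx : x ∈ DyckN n) (hs : SigmaSeq x s) :
    ∀ P : List (List Bool),
      P = (List.scanl flipAt x s).map (fun y => y ++ [false]) →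
      (∀ y ∈ P, y.length = 2 * n + 1 ∧ (y.count true = n ∨ y.count true = n + 1)) ∧
      List.Chain' (fun a b => diffCount a b = 1) P ∧
      P.Nodup := by
  intro P hP
  obtain ⟨hxlen, hxd⟩ := hx
  obtain ⟨u, v, su, hdu, hdv, hxeq, hsuA, hseq⟩ := hs
  obtain ⟨Tu, eu, hTuNe, hTuHead, hTuLast, heuWt, heuLen, hTuLen, hTuWt, hTuNe1,
    hTuChain, hTuNodup, hTuScanl⟩ := sp_window hsuA (by norm_num)
  obtain ⟨Tu', rfl⟩ : ∃ Tu', Tu = (false :: u) :: Tu' := by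
    cases Tu with
    | nil => exact absurd hTuHead (by simp)
    | cons t ts =>
      have ht : t = false :: u := by simpa using hTuHead
      exact ⟨ts, by rw [ht]⟩
  subst hxeq hseq hP
  have hxc := hxd.1
  have hcl := sp_count_len (true :: u ++ false :: v)
  have hwt : (true :: u ++ false :: v).count true = n := by omega
  have hsplit : (true :: u ++ false :: v).count true = u.count true + v.count true + 1 := by
    simp [List.count_append, List.count_cons] <;> omega
  have hn : u.count true + v.count true + 1 = n := by omega
  have hlsplit : u.length + v.length + 2 = 2 * n := by
    have h := hxlen
    simp at h
    omega
  have hx1 : flipAt (true :: (u ++ false :: v)) (u.length + 2)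
      = true :: (u ++ true :: v) := by
    have := sp_flipAt_offset [] (true :: u) false v [] (p := u.length + 2) (by simp)
    simpa using this
  have hx2 : flipAt (true :: (u ++ true :: v)) 1 = false :: (u ++ true :: v) := by
    have := sp_flipAt_offset [] [] true (u ++ true :: v) [] (p := 1) (by simp)
    simpa using this
  have hscan : List.scanl flipAt (false :: (u ++ true :: v)) su
      = ((false :: u) :: Tu').map (fun z => z ++ true :: v) := by
    have h := hTuScanl [] (true :: v) (by simp)
    rw [show ([] : List Bool) ++ false :: u ++ true :: v = false :: (u ++ true :: v) by simp] at h
    rw [h]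
    apply List.map_congr_left
    intro z _
    simp
  have hL : List.scanl flipAt (true :: u ++ false :: v) ((u.length + 2) :: 1 :: su)
      = (true :: (u ++ false :: v)) :: (true :: (u ++ true :: v)) ::
        ((false :: u) :: Tu').map (fun z => z ++ true :: v) := by
    rw [show (true :: u ++ false :: v : List Bool) = true :: (u ++ false :: v) by simp]
    rw [List.scanl_cons, hx1, List.scanl_cons, hx2, hscan]
  rw [hL]
  refine ⟨?_, ?_, ?_⟩
  · intro y hy
    simp only [List.mem_map, List.mem_cons] at hy
    obtain ⟨y0, hy0, rfl⟩ := hy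
    rcases hy0 with rfl | rfl | ⟨z, hz, rfl⟩
    · constructor
      · simp <;> omega
      · left
        simp [List.count_append, List.count_cons] <;> omega
    · constructor
      · simp <;> omega
      · right
        simp [List.count_append, List.count_cons] <;> omega
    · constructor
      · have := hTuLen z (List.mem_cons.mpr hz)
        simp [this] <;> omega
      · rcases hTuWt z (List.mem_cons.mpr hz) with h | h
        · left; simp [List.count_append, List.count_cons, h] <;> omega
        · right; simp [List.count_append, List.count_cons, h] <;> omega
  · refine (List.isChain_map _).mpr ?_
    have hchain : List.Chain' (fun p q => p.length = q.length ∧ diffCount p q = 1)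
        ((true :: (u ++ false :: v)) :: (true :: (u ++ true :: v)) ::
          ((false :: u) :: Tu').map (fun z => z ++ true :: v)) := by
      refine List.isChain_cons.mpr ⟨?_, List.isChain_cons.mpr ⟨?_, ?_⟩⟩
      · intro y hy
        simp only [List.head?_cons, Option.mem_def, Option.some.injEq] at hy
        subst hy
        refine ⟨by simp, ?_⟩
        have := sp_diffCount_flip (true :: u) false true v (by simp)
        simpa using this
      · intro y hy
        simp only [List.map_cons, List.head?_cons, Option.mem_def, Option.some.injEq] at hy
        subst hy
        refine ⟨by simp, ?_⟩
        have := sp_diffCount_flip [] true false (u ++ true :: v) (by simp)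
        simpa using this
      · refine (List.isChain_map _).mpr (hTuChain.imp ?_)
        rintro p q ⟨hl, hd⟩
        refine ⟨by simp [hl], ?_⟩
        have := sp_diffCount_lift [] (true :: v) p q hl
        simpa [hd] using this
    refine hchain.imp ?_
    rintro p q ⟨hl, hd⟩
    have := sp_diffCount_lift [] [false] p q hl
    simpa [hd] using this
  · refine List.Nodup.map ?_ ?_
    · intro p q hpq
      exact (List.append_inj' hpq rfl).1
    · rw [List.nodup_cons, List.nodup_cons]
      refine ⟨?_, ?_, ?_⟩
      · intro hmem
        rcases List.mem_cons.mp hmem with h | h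
        · have h2 : u ++ (false :: v) = u ++ (true :: v) := by injection h
          have h3 := List.append_cancel_left h2
          simp at h3
        · simp only [List.mem_map, List.mem_cons] at h
          obtain ⟨z, hz, h⟩ := h
          have h2 : z ++ (true :: v) = (true :: u) ++ (false :: v) := h
          obtain ⟨h3, h4⟩ := List.append_inj h2 (by simp [hTuLen z (List.mem_cons.mpr hz)])
          simp at h4
      · intro hmem
        simp only [List.mem_map, List.mem_cons] at hmem
        obtain ⟨z, hz, h⟩ := hmem
        have h2 : z ++ (true :: v) = (true :: u) ++ (true :: v) := h
        have h3 := List.append_cancel_right h2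
        exact hTuNe1 z (List.mem_cons.mpr hz) h3
      · exact hTuNodup.map (fun p q hpq => List.append_cancel_right hpq)
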